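/- Let c, d be rationals in (0,1) with c + d < 1, let f be the bijective two-interval PAM determined by c and d (viewed as a map ℝ → ℝ), let α = (1−c−d)/(c·d), h(x) = Real.log (α·x + 1) / Real.log (α + 1), and τ = h(d). Then for every natural number n ≥ 1 and every real γ with 0 < γ < 1: n · f^[n] 0 < γ if and only if Int.fract (n·τ) < h (γ/n). -/
import Mathlib


/-- The bijective two-interval PAM determined by `c, d ∈ (0,1)`, as a map `ℝ → ℝ`:
it sends `[0,c)` onto `[d,1)` and `[c,1)` onto `[0,d)`. -/
noncomputable def bpamR (c d : ℝ) (x : ℝ) : ℝ :=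
  if 0 ≤ x ∧ x < c then (1 - d) / c * x + d
  else if c ≤ x ∧ x < 1 then d / (1 - c) * x - c * d / (1 - c)
  else 0

/-- The conjugating homeomorphism `h(x) = log (α x + 1) / log (α + 1)`. -/
noncomputable def hFun (α x : ℝ) : ℝ := Real.log (α * x + 1) / Real.log (α + 1)

section aux

variable {c d : ℝ} (hc0 : 0 < c) (hc1 : c < 1) (hd0 : 0 < d) (hd1 : d < 1)
  (hcd : c + d < 1)

lemma alpha_pos (hc0 : 0 < c) (hd0 : 0 < d) (hcd : c + d < 1) :
    0 < (1 - c - d) / (c * d) := by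
  apply div_pos (by linarith) (by positivity)

lemma hFun_strictMonoOn {α : ℝ} (hα : 0 < α) :
    StrictMonoOn (hFun α) (Set.Ici 0) := by
  intro x hx y _ hxy
  have hlog : 0 < Real.log (α + 1) := Real.log_pos (by linarith)
  have h1 : (0:ℝ) < α * x + 1 := by
    have : 0 ≤ α * x := mul_nonneg hα.le hx
    linarith
  have h2 : α * x + 1 < α * y + 1 := by
    have := mul_lt_mul_of_pos_left hxy hα
    linarith
  exact div_lt_div_of_pos_right (Real.log_lt_log h1 h2) hlog |>.trans_le le_rfl

lemma hFun_nonneg {α x : ℝ} (hα : 0 < α) (hx : 0 ≤ x) : 0 ≤ hFun α x := by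
  have hlog : 0 < Real.log (α + 1) := Real.log_pos (by linarith)
  have : 0 ≤ Real.log (α * x + 1) := Real.log_nonneg (by nlinarith)
  exact div_nonneg this hlog.le

lemma hFun_one {α : ℝ} (hα : 0 < α) : hFun α 1 = 1 := by
  have hlog : Real.log (α + 1) ≠ 0 := ne_of_gt (Real.log_pos (by linarith))
  simp [hFun, div_self hlog]

lemma hFun_zero {α : ℝ} : hFun α 0 = 0 := by simp [hFun]

lemma hFun_lt_one {α x : ℝ} (hα : 0 < α) (hx0 : 0 ≤ x) (hx1 : x < 1) :
    hFun α x < 1 := by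
  have := hFun_strictMonoOn hα (Set.mem_Ici.2 hx0) (Set.mem_Ici.2 zero_le_one) hx1
  rwa [hFun_one hα] at this

include hc0 hc1 hd0 hd1 hcd in
lemma bpam_step {x : ℝ} (hx : x ∈ Set.Ico (0:ℝ) 1) :
    bpamR c d x ∈ Set.Ico (0:ℝ) 1 ∧
    hFun ((1 - c - d) / (c * d)) (bpamR c d x) =
      Int.fract (hFun ((1 - c - d) / (c * d)) x + hFun ((1 - c - d) / (c * d)) d) := by
  set α := (1 - c - d) / (c * d) with hαdef
  have hα : 0 < α := alpha_pos hc0 hd0 hcd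
  have hlogpos : 0 < Real.log (α + 1) := Real.log_pos (by linarith)
  obtain ⟨hx0, hx1⟩ := hx
  have hαx : (0:ℝ) < α * x + 1 := by nlinarith
  have hαd : (0:ℝ) < α * d + 1 := by nlinarith
  by_cases hcase : x < c
  · have hfx : bpamR c d x = (1 - d) / c * x + d := by
      simp [bpamR, hx0, hcase]
    have hfx0 : 0 ≤ bpamR c d x := by
      rw [hfx]
      have : 0 ≤ (1 - d) / c * x := mul_nonneg (div_nonneg (by linarith) hc0.le) hx0
      linarith
    have hfx1 : bpamR c d x < 1 := by
      rw [hfx]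
      have h1 : (1 - d) / c * x < (1 - d) / c * c := by
        apply mul_lt_mul_of_pos_left hcase (div_pos (by linarith) hc0)
      have h2 : (1 - d) / c * c = 1 - d := by field_simp
      linarith
    refine ⟨⟨hfx0, hfx1⟩, ?_⟩
    have key : α * bpamR c d x + 1 = (α * x + 1) * (α * d + 1) := by
      rw [hfx, hαdef]; field_simp; ring
    have hlogmul : Real.log (α * bpamR c d x + 1) =
        Real.log (α * x + 1) + Real.log (α * d + 1) := by
      rw [key, Real.log_mul (ne_of_gt hαx) (ne_of_gt hαd)]
    have hsum : hFun α (bpamR c d x) = hFun α x + hFun α d := by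
      simp only [hFun, hlogmul]; ring
    rw [hsum, Int.fract_eq_self.2 ⟨?_, ?_⟩]
    · rw [← hsum]; exact hFun_nonneg hα hfx0
    · rw [← hsum]; exact hFun_lt_one hα hfx0 hfx1
  · push_neg at hcase
    have hfx : bpamR c d x = d / (1 - c) * x - c * d / (1 - c) := by
      simp [bpamR, hx0, hcase, hx1, not_lt.2 hcase]
    have h1c : (0:ℝ) < 1 - c := by linarith
    have hfx0 : 0 ≤ bpamR c d x := by
      rw [hfx]
      have e : d / (1 - c) * x - c * d / (1 - c) = d * (x - c) / (1 - c) := by ring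
      rw [e]
      exact div_nonneg (mul_nonneg hd0.le (by linarith)) h1c.le
    have hfxd : bpamR c d x < d := by
      rw [hfx, div_mul_eq_mul_div, div_sub_div_same, div_lt_iff₀ h1c]
      nlinarith
    refine ⟨⟨hfx0, by linarith⟩, ?_⟩
    have hαfx : (0:ℝ) < α * bpamR c d x + 1 := by nlinarith
    have key : (α + 1) * (α * bpamR c d x + 1) = (α * x + 1) * (α * d + 1) := by
      rw [hfx, hαdef]; field_simp; ring
    have hlogmul : Real.log (α * bpamR c d x + 1) =
        Real.log (α * x + 1) + Real.log (α * d + 1) - Real.log (α + 1) := by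
      have := Real.log_mul (ne_of_gt (by linarith : (0:ℝ) < α + 1)) (ne_of_gt hαfx)
      rw [key, Real.log_mul (ne_of_gt hαx) (ne_of_gt hαd)] at this
      linarith
    have hsum : hFun α (bpamR c d x) = hFun α x + hFun α d - 1 := by
      simp only [hFun, hlogmul]
      field_simp
    have heq : hFun α x + hFun α d = hFun α (bpamR c d x) + 1 := by linarith [hsum]
    rw [heq]
    rw [show hFun α (bpamR c d x) + 1 = hFun α (bpamR c d x) + (1:ℤ) by push_cast; ring,
      Int.fract_add_intCast]
    exact (Int.fract_eq_self.2 ⟨hFun_nonneg hα hfx0,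
      hFun_lt_one hα hfx0 (by linarith)⟩).symm

include hc0 hc1 hd0 hd1 hcd in
lemma bpam_iter (n : ℕ) :
    (bpamR c d)^[n] 0 ∈ Set.Ico (0:ℝ) 1 ∧
    hFun ((1 - c - d) / (c * d)) ((bpamR c d)^[n] 0) =
      Int.fract ((n : ℝ) * hFun ((1 - c - d) / (c * d)) d) := by
  induction n with
  | zero => simp [hFun_zero]
  | succ n ih =>
    obtain ⟨hmem, heq⟩ := ih
    rw [Function.iterate_succ_apply']
    obtain ⟨hmem', heq'⟩ := bpam_step hc0 hc1 hd0 hd1 hcd hmem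
    refine ⟨hmem', ?_⟩
    rw [heq', heq]
    set τ := hFun ((1 - c - d) / (c * d)) d
    have e : Int.fract ((n:ℝ) * τ) + τ = ((n:ℝ) * τ + τ) - (⌊(n:ℝ) * τ⌋ : ℤ) := by
      rw [Int.fract]; ring
    rw [e, Int.fract_sub_intCast]
    congr 1
    push_cast
    ring

end aux

/-- The shrinking interval condition `n · fⁿ(0) < γ` translates, via the conjugacy `h`,
to the inequality `{n τ} < h(γ/n)` about the rotation by `τ = h(d)`. -/
theorem bpam_shrinking_interval_iff (c d : ℚ)
    (hc0 : 0 < c) (hc1 : c < 1) (hd0 : 0 < d) (hd1 : d < 1)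
    (hcd : c + d < 1) :
    ∀ n : ℕ, 1 ≤ n → ∀ γ : ℝ, 0 < γ → γ < 1 →
      ((n : ℝ) * (bpamR (c : ℝ) (d : ℝ))^[n] 0 < γ ↔
        Int.fract ((n : ℝ) * hFun ((1 - c - d) / (c * d) : ℝ) (d : ℝ)) <
          hFun ((1 - c - d) / (c * d) : ℝ) (γ / (n : ℝ))) := by
  intro n hn γ hγ0 hγ1
  have hc0' : (0:ℝ) < (c:ℝ) := by exact_mod_cast hc0
  have hc1' : (c:ℝ) < 1 := by exact_mod_cast hc1
  have hd0' : (0:ℝ) < (d:ℝ) := by exact_mod_cast hd0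
  have hd1' : (d:ℝ) < 1 := by exact_mod_cast hd1
  have hcd' : (c:ℝ) + (d:ℝ) < 1 := by exact_mod_cast hcd
  have hcast : ((1 - c - d) / (c * d) : ℚ) = ((1 - (c:ℝ) - d) / (c * d) : ℝ) := by
    push_cast; ring
  set α : ℝ := (1 - (c:ℝ) - (d:ℝ)) / ((c:ℝ) * (d:ℝ)) with hα
  have hαpos : 0 < α := alpha_pos hc0' hd0' hcd'
  obtain ⟨hmem, heq⟩ := bpam_iter hc0' hc1' hd0' hd1' hcd' n
  have hn0 : (0:ℝ) < (n:ℝ) := by exact_mod_cast hn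
  have h1 : (n : ℝ) * (bpamR (c : ℝ) (d : ℝ))^[n] 0 < γ ↔
      (bpamR (c : ℝ) (d : ℝ))^[n] 0 < γ / n := by
    rw [lt_div_iff₀ hn0, mul_comm]
  rw [h1, ← heq]
  have hγn0 : 0 < γ / n := div_pos hγ0 hn0
  exact ((hFun_strictMonoOn hαpos).lt_iff_lt (Set.mem_Ici.2 hmem.1) (Set.mem_Ici.2 hγn0.le)).symm
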